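/- Let (Σ, μ) be a measure space with μ a finite measure satisfying μ(Σ) > 0, let p₀ ∈ (1, ∞), let S be a nonempty set of measurable functions u : Σ → ℝ each satisfying 0 < ‖u‖_{L^{p₀}(μ)} < ∞, and let F : S → ℝ satisfy F(u) ≥ 0 for all u ∈ S. For p ∈ (1, p₀] define λ(p) = inf_{u ∈ S} F(u) / ‖u‖_{L^{p}(μ)}². Then λ(p) → λ(p₀) as p → p₀ from below. -/

import Mathlib

open MeasureTheory Real Filter
open scoped ENNReal NNReal

section Aux
variable {Ω : Type*} [MeasurableSpace Ω] {μ : Measure Ω}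

private lemma int_eq_enorm (u : Ω → ℝ) (p : ℝ) :
    (∫⁻ x, ENNReal.ofReal |u x| ^ p ∂μ) = ∫⁻ x, (‖u x‖₊ : ℝ≥0∞) ^ p ∂μ := by
  simp [← enorm_eq_nnnorm, Real.enorm_eq_ofReal_abs]

private lemma holder_aux [IsFiniteMeasure μ] {u : Ω → ℝ} (hu : Measurable u)
    {p q : ℝ} (hp : 0 < p) (hpq : p ≤ q) :
    (∫⁻ x, ENNReal.ofReal |u x| ^ p ∂μ) ^ (1/p)
      ≤ (∫⁻ x, ENNReal.ofReal |u x| ^ q ∂μ) ^ (1/q) * μ Set.univ ^ (1/p - 1/q) := by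
  have h := eLpNorm'_le_eLpNorm'_mul_rpow_measure_univ (f := u) (μ := μ) hp hpq
    hu.aestronglyMeasurable
  rw [int_eq_enorm (μ := μ) u p, int_eq_enorm (μ := μ) u q]
  simpa [eLpNorm', one_div, enorm_eq_nnnorm] using h

private lemma meas_aux {u : Ω → ℝ} (hu : Measurable u) (p : ℝ) :
    Measurable fun x => ENNReal.ofReal |u x| ^ p :=
  (ENNReal.measurable_ofReal.comp hu.abs).pow measurable_const

private lemma int_ne_zero {u : Ω → ℝ} (hu : Measurable u) {p q : ℝ} (hq : 0 < q)
    (h : (∫⁻ x, ENNReal.ofReal |u x| ^ q ∂μ) ≠ 0) :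
    (∫⁻ x, ENNReal.ofReal |u x| ^ p ∂μ) ≠ 0 := by
  contrapose! h
  rw [lintegral_eq_zero_iff (meas_aux hu p)] at h
  rw [lintegral_eq_zero_iff (meas_aux hu q)]
  filter_upwards [h] with x hx
  simp only [Pi.zero_apply, ENNReal.rpow_eq_zero_iff] at hx ⊢
  rcases hx with ⟨h0, _⟩ | ⟨htop, _⟩
  · exact Or.inl ⟨h0, hq⟩
  · exact absurd htop ENNReal.ofReal_ne_top

private lemma tendsto_lint [IsFiniteMeasure μ] {u : Ω → ℝ} (hu : Measurable u)
    {p₀ : ℝ} (hp₀ : 1 < p₀)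
    (hfin : (∫⁻ x, ENNReal.ofReal |u x| ^ p₀ ∂μ) ≠ ⊤) :
    Tendsto (fun p => ∫⁻ x, ENNReal.ofReal |u x| ^ p ∂μ) (nhdsWithin p₀ (Set.Iio p₀))
      (nhds (∫⁻ x, ENNReal.ofReal |u x| ^ p₀ ∂μ)) := by
  have hmem : ∀ᶠ p in nhdsWithin p₀ (Set.Iio p₀), p ∈ Set.Ioo 1 p₀ := by
    filter_upwards [self_mem_nhdsWithin,
      eventually_nhdsWithin_of_eventually_nhds (eventually_gt_nhds hp₀)] with p h1 h2
    exact ⟨h2, h1⟩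
  refine tendsto_lintegral_filter_of_dominated_convergence
    (fun x => 1 + ENNReal.ofReal |u x| ^ p₀) ?_ ?_ ?_ ?_
  · exact Eventually.of_forall fun p => meas_aux hu p
  · filter_upwards [hmem] with p hp
    refine Eventually.of_forall fun x => ?_
    rcases le_or_gt (ENNReal.ofReal |u x|) 1 with h | h
    · calc ENNReal.ofReal |u x| ^ p ≤ 1 := ENNReal.rpow_le_one h (le_of_lt (lt_trans one_pos hp.1))
        _ ≤ _ := le_self_add
    · calc ENNReal.ofReal |u x| ^ p ≤ ENNReal.ofReal |u x| ^ p₀ :=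
          ENNReal.rpow_le_rpow_of_exponent_le h.le hp.2.le
        _ ≤ _ := le_add_self
  · rw [lintegral_add_left measurable_const]
    simp only [lintegral_one]
    exact ENNReal.add_ne_top.2 ⟨(measure_ne_top μ _), hfin⟩
  · refine Eventually.of_forall fun x => Tendsto.mono_left ?_ nhdsWithin_le_nhds
    rcases eq_or_ne (|u x|) 0 with h | h
    · have hpos : (0:ℝ) < p₀ := lt_trans one_pos hp₀
      simp only [h, ENNReal.ofReal_zero]
      rw [ENNReal.zero_rpow_of_pos hpos]
      refine Tendsto.congr' ?_ tendsto_const_nhds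
      filter_upwards [eventually_gt_nhds hpos] with p hp
      exact (ENNReal.zero_rpow_of_pos hp).symm
    · have habs : 0 < |u x| := (abs_nonneg _).lt_of_ne (Ne.symm h)
      have hcont : ContinuousAt (fun p : ℝ => ENNReal.ofReal (|u x| ^ p)) p₀ :=
        ENNReal.continuous_ofReal.continuousAt.comp (Real.continuousAt_const_rpow habs.ne')
      have heq : (fun p : ℝ => ENNReal.ofReal |u x| ^ p) = fun p => ENNReal.ofReal (|u x| ^ p) := by
        funext p
        rw [← ENNReal.ofReal_rpow_of_pos habs]
      rw [heq, ENNReal.ofReal_rpow_of_pos habs]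
      exact hcont

private lemma tendsto_norm_aux [IsFiniteMeasure μ] {u : Ω → ℝ} (hu : Measurable u)
    {p₀ : ℝ} (hp₀ : 1 < p₀)
    (h0 : (∫⁻ x, ENNReal.ofReal |u x| ^ p₀ ∂μ) ≠ 0)
    (hfin : (∫⁻ x, ENNReal.ofReal |u x| ^ p₀ ∂μ) ≠ ⊤) :
    Tendsto (fun p => (((∫⁻ x, ENNReal.ofReal |u x| ^ p ∂μ) ^ (1/p)).toReal))
      (nhdsWithin p₀ (Set.Iio p₀))
      (nhds (((∫⁻ x, ENNReal.ofReal |u x| ^ p₀ ∂μ) ^ (1/p₀)).toReal)) := by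
  set I : ℝ → ℝ≥0∞ := fun p => ∫⁻ x, ENNReal.ofReal |u x| ^ p ∂μ with hI
  have h1 : Tendsto (fun p => (I p).toReal) (nhdsWithin p₀ (Set.Iio p₀)) (nhds (I p₀).toReal) :=
    (ENNReal.tendsto_toReal hfin).comp (tendsto_lint hu hp₀ hfin)
  have h2 : Tendsto (fun p : ℝ => 1/p) (nhdsWithin p₀ (Set.Iio p₀)) (nhds (1/p₀)) := by
    refine Tendsto.mono_left ?_ nhdsWithin_le_nhds
    exact tendsto_const_nhds.div tendsto_id (by positivity)
  have hb : (I p₀).toReal ≠ 0 := by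
    simp only [ne_eq, ENNReal.toReal_eq_zero_iff]
    push_neg
    exact ⟨h0, hfin⟩
  have hc : ContinuousAt (fun q : ℝ × ℝ => q.1 ^ q.2) ((I p₀).toReal, 1/p₀) :=
    Real.continuousAt_rpow _ (Or.inl hb)
  have h3 : Tendsto (fun p => (I p).toReal ^ (1/p)) (nhdsWithin p₀ (Set.Iio p₀))
      (nhds ((I p₀).toReal ^ (1/p₀))) :=
    hc.tendsto.comp (h1.prodMk_nhds h2)
  simpa only [ENNReal.toReal_rpow] using h3

private lemma squeeze_lemma {lam c : ℝ → ℝ} {l : Filter ℝ} {L : ℝ}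
    (hc : Tendsto c l (nhds 1))
    (hlow : ∀ᶠ p in l, L / (c p) ^ 2 ≤ lam p)
    (hup : ∀ ε > 0, ∀ᶠ p in l, lam p < L + ε) :
    Tendsto lam l (nhds L) := by
  rw [Metric.tendsto_nhds]
  intro ε hε
  have h1 : Tendsto (fun p => L / (c p) ^ 2) l (nhds L) := by
    have h0 : Tendsto (fun p => L / (c p) ^ 2) l (nhds (L / 1 ^ 2)) :=
      Tendsto.div tendsto_const_nhds (hc.pow 2) (by norm_num)
    simpa using h0
  have h2 : ∀ᶠ p in l, L - ε < L / (c p) ^ 2 := h1.eventually_const_lt (by linarith)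
  filter_upwards [hlow, h2, hup ε hε] with p ha hb hcc
  rw [Real.dist_eq, abs_sub_lt_iff]
  constructor <;> linarith

end Aux

/-- Convergence of the subcritical infima to the critical one: on a finite measure
space with `μ(Σ) > 0`, for a nonempty family `S` of measurable functions with
`0 < ‖u‖_{L^{p₀}} < ∞` and a nonnegative functional `F`, the infima
`λ(p) = inf_{u ∈ S} F(u)/‖u‖_{L^p}²` satisfy `λ(p) → λ(p₀)` as `p → p₀` from below. -/
theorem stmt_6 {Ω : Type*} [MeasurableSpace Ω] (μ : Measure Ω) [IsFiniteMeasure μ]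
    (hμ : 0 < μ Set.univ) (p₀ : ℝ) (hp₀ : 1 < p₀)
    (S : Set (Ω → ℝ)) (hS : S.Nonempty) (hmeas : ∀ u ∈ S, Measurable u)
    (hnorm : ∀ u ∈ S, 0 < (∫⁻ x, ENNReal.ofReal |u x| ^ p₀ ∂μ) ^ (1 / p₀)
        ∧ (∫⁻ x, ENNReal.ofReal |u x| ^ p₀ ∂μ) ^ (1 / p₀) ≠ ⊤)
    (F : (Ω → ℝ) → ℝ) (hF : ∀ u ∈ S, 0 ≤ F u) :
    Tendsto (fun p : ℝ => sInf ((fun u => F u /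
          (((∫⁻ x, ENNReal.ofReal |u x| ^ p ∂μ) ^ (1 / p)).toReal) ^ 2) '' S))
        (nhdsWithin p₀ (Set.Iio p₀))
        (nhds (sInf ((fun u => F u /
          (((∫⁻ x, ENNReal.ofReal |u x| ^ p₀ ∂μ) ^ (1 / p₀)).toReal) ^ 2) '' S))) := by
  have hp₀0 : (0:ℝ) < p₀ := lt_trans one_pos hp₀
  -- basic facts about u ∈ S at exponent p₀
  have hI0 : ∀ u ∈ S, (∫⁻ x, ENNReal.ofReal |u x| ^ p₀ ∂μ) ≠ 0 := by
    intro u hu h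
    have h2 := (hnorm u hu).1
    rw [h, ENNReal.zero_rpow_of_pos (by positivity : (0:ℝ) < 1/p₀)] at h2
    exact lt_irrefl _ h2
  have hIfin : ∀ u ∈ S, (∫⁻ x, ENNReal.ofReal |u x| ^ p₀ ∂μ) ≠ ⊤ := by
    intro u hu h
    have h2 := (hnorm u hu).2
    rw [h] at h2
    exact h2 (ENNReal.top_rpow_of_pos (by positivity : (0:ℝ) < 1/p₀))
  have hN0pos : ∀ u ∈ S,
      0 < (((∫⁻ x, ENNReal.ofReal |u x| ^ p₀ ∂μ) ^ (1/p₀)).toReal) := by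
    intro u hu
    refine ENNReal.toReal_pos ?_ (hnorm u hu).2
    simp only [ne_eq, ENNReal.rpow_eq_zero_iff, not_or, not_and]
    exact ⟨fun h => absurd h (hI0 u hu), fun h => absurd h (hIfin u hu)⟩
  -- nonnegativity / bddBelow of the image sets
  have hg_nonneg : ∀ p : ℝ, ∀ v ∈ ((fun u => F u /
      (((∫⁻ x, ENNReal.ofReal |u x| ^ p ∂μ) ^ (1/p)).toReal) ^ 2) '' S), 0 ≤ v := by
    rintro p v ⟨u, hu, rfl⟩
    exact div_nonneg (hF u hu) (by positivity)
  have hbdd : ∀ p : ℝ, BddBelow ((fun u => F u /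
      (((∫⁻ x, ENNReal.ofReal |u x| ^ p ∂μ) ^ (1/p)).toReal) ^ 2) '' S) :=
    fun p => ⟨0, fun v hv => hg_nonneg p v hv⟩
  have himg : ∀ p : ℝ, ((fun u => F u /
      (((∫⁻ x, ENNReal.ofReal |u x| ^ p ∂μ) ^ (1/p)).toReal) ^ 2) '' S).Nonempty :=
    fun p => hS.image _
  have hm : 0 < (μ Set.univ).toReal := ENNReal.toReal_pos hμ.ne' (measure_ne_top μ _)
  have hmem : ∀ᶠ p in nhdsWithin p₀ (Set.Iio p₀), p ∈ Set.Ioo 1 p₀ := by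
    filter_upwards [self_mem_nhdsWithin,
      eventually_nhdsWithin_of_eventually_nhds (eventually_gt_nhds hp₀)] with p h1 h2
    exact ⟨h2, h1⟩
  refine squeeze_lemma (c := fun p => (μ Set.univ).toReal ^ (1/p - 1/p₀)) ?_ ?_ ?_
  · -- c → 1
    have h2 : Tendsto (fun p : ℝ => 1/p - 1/p₀) (nhdsWithin p₀ (Set.Iio p₀)) (nhds 0) := by
      have h3 : Tendsto (fun p : ℝ => 1/p - 1/p₀) (nhds p₀) (nhds (1/p₀ - 1/p₀)) :=
        (tendsto_const_nhds.div tendsto_id (by positivity)).sub tendsto_const_nhds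
      simpa using h3.mono_left nhdsWithin_le_nhds
    have hcont : ContinuousAt (fun e : ℝ => (μ Set.univ).toReal ^ e) 0 :=
      Real.continuousAt_const_rpow hm.ne'
    have h4 := hcont.tendsto.comp h2
    simpa [Function.comp_def] using h4
  · -- lower bound
    filter_upwards [hmem] with p hp
    have hp0 : (0:ℝ) < p := lt_trans one_pos hp.1
    have hcp : 0 < (μ Set.univ).toReal ^ (1/p - 1/p₀) := Real.rpow_pos_of_pos hm _
    refine le_csInf (himg p) ?_
    rintro v ⟨u, hu, rfl⟩
    have hmeasu := hmeas u hu
    have hexp : 0 ≤ 1/p - 1/p₀ := by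
      have h5 : 1/p₀ ≤ 1/p := one_div_le_one_div_of_le hp0 hp.2.le
      linarith
    have hhold := holder_aux (μ := μ) hmeasu hp0 hp.2.le
    have hrhs_fin : (∫⁻ x, ENNReal.ofReal |u x| ^ p₀ ∂μ) ^ (1/p₀)
        * μ Set.univ ^ (1/p - 1/p₀) ≠ ⊤ :=
      ENNReal.mul_ne_top (hnorm u hu).2
        (ENNReal.rpow_ne_top_of_nonneg hexp (measure_ne_top μ _))
    have hIp0 : (∫⁻ x, ENNReal.ofReal |u x| ^ p ∂μ) ≠ 0 :=
      int_ne_zero hmeasu hp₀0 (hI0 u hu)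
    have hNp_fin : (∫⁻ x, ENNReal.ofReal |u x| ^ p ∂μ) ^ (1/p) ≠ ⊤ :=
      ne_top_of_le_ne_top hrhs_fin hhold
    have hNp_pos : 0 < (((∫⁻ x, ENNReal.ofReal |u x| ^ p ∂μ) ^ (1/p)).toReal) := by
      refine ENNReal.toReal_pos ?_ hNp_fin
      simp only [ne_eq, ENNReal.rpow_eq_zero_iff, not_or, not_and]
      refine ⟨fun h => absurd h hIp0, fun _ => not_lt.2 (by positivity)⟩
    have hNle : (((∫⁻ x, ENNReal.ofReal |u x| ^ p ∂μ) ^ (1/p)).toReal)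
        ≤ (((∫⁻ x, ENNReal.ofReal |u x| ^ p₀ ∂μ) ^ (1/p₀)).toReal)
          * (μ Set.univ).toReal ^ (1/p - 1/p₀) := by
      have h6 := ENNReal.toReal_mono hrhs_fin hhold
      rw [ENNReal.toReal_mul] at h6
      rwa [ENNReal.toReal_rpow]
    have hstep : F u / ((((∫⁻ x, ENNReal.ofReal |u x| ^ p₀ ∂μ) ^ (1/p₀)).toReal)
          * (μ Set.univ).toReal ^ (1/p - 1/p₀)) ^ 2
        ≤ F u / ((((∫⁻ x, ENNReal.ofReal |u x| ^ p ∂μ) ^ (1/p)).toReal)) ^ 2 := by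
      gcongr
      exact hF u hu
    have hrw : F u / ((((∫⁻ x, ENNReal.ofReal |u x| ^ p₀ ∂μ) ^ (1/p₀)).toReal)
          * (μ Set.univ).toReal ^ (1/p - 1/p₀)) ^ 2
        = (F u / ((((∫⁻ x, ENNReal.ofReal |u x| ^ p₀ ∂μ) ^ (1/p₀)).toReal)) ^ 2)
          / ((μ Set.univ).toReal ^ (1/p - 1/p₀)) ^ 2 := by
      rw [mul_pow, ← div_div]
    have hinf : sInf ((fun u => F u /
          (((∫⁻ x, ENNReal.ofReal |u x| ^ p₀ ∂μ) ^ (1 / p₀)).toReal) ^ 2) '' S)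
        ≤ F u / ((((∫⁻ x, ENNReal.ofReal |u x| ^ p₀ ∂μ) ^ (1/p₀)).toReal)) ^ 2 :=
      csInf_le (hbdd p₀) ⟨u, hu, rfl⟩
    calc sInf ((fun u => F u /
          (((∫⁻ x, ENNReal.ofReal |u x| ^ p₀ ∂μ) ^ (1 / p₀)).toReal) ^ 2) '' S)
          / ((μ Set.univ).toReal ^ (1/p - 1/p₀)) ^ 2
        ≤ (F u / ((((∫⁻ x, ENNReal.ofReal |u x| ^ p₀ ∂μ) ^ (1/p₀)).toReal)) ^ 2)
          / ((μ Set.univ).toReal ^ (1/p - 1/p₀)) ^ 2 := by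
          exact div_le_div_of_nonneg_right hinf (by positivity)
      _ = F u / ((((∫⁻ x, ENNReal.ofReal |u x| ^ p₀ ∂μ) ^ (1/p₀)).toReal)
          * (μ Set.univ).toReal ^ (1/p - 1/p₀)) ^ 2 := hrw.symm
      _ ≤ _ := hstep
  · -- upper bound
    intro ε hε
    have hlt : sInf ((fun u => F u /
          (((∫⁻ x, ENNReal.ofReal |u x| ^ p₀ ∂μ) ^ (1 / p₀)).toReal) ^ 2) '' S)
        < sInf ((fun u => F u /
          (((∫⁻ x, ENNReal.ofReal |u x| ^ p₀ ∂μ) ^ (1 / p₀)).toReal) ^ 2) '' S) + ε/2 := by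
      linarith
    obtain ⟨v, ⟨u, hu, rfl⟩, hv⟩ := exists_lt_of_csInf_lt (himg p₀) hlt
    have hv' : F u / (((∫⁻ x, ENNReal.ofReal |u x| ^ p₀ ∂μ) ^ (1 / p₀)).toReal) ^ 2
        < sInf ((fun u => F u /
          (((∫⁻ x, ENNReal.ofReal |u x| ^ p₀ ∂μ) ^ (1 / p₀)).toReal) ^ 2) '' S) + ε/2 := hv
    have hN := tendsto_norm_aux (μ := μ) (hmeas u hu) hp₀ (hI0 u hu) (hIfin u hu)
    have hgu : Tendsto (fun p => F u /
          (((∫⁻ x, ENNReal.ofReal |u x| ^ p ∂μ) ^ (1 / p)).toReal) ^ 2)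
        (nhdsWithin p₀ (Set.Iio p₀))
        (nhds (F u / (((∫⁻ x, ENNReal.ofReal |u x| ^ p₀ ∂μ) ^ (1 / p₀)).toReal) ^ 2)) :=
      tendsto_const_nhds.div (hN.pow 2) (pow_ne_zero 2 (hN0pos u hu).ne')
    have hev := hgu.eventually_lt_const (by linarith : F u / (((∫⁻ x, ENNReal.ofReal |u x| ^ p₀ ∂μ) ^ (1 / p₀)).toReal) ^ 2 < sInf ((fun u => F u / (((∫⁻ x, ENNReal.ofReal |u x| ^ p₀ ∂μ) ^ (1 / p₀)).toReal) ^ 2) '' S) + ε)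
    filter_upwards [hev] with p hp
    calc sInf ((fun u => F u /
          (((∫⁻ x, ENNReal.ofReal |u x| ^ p ∂μ) ^ (1 / p)).toReal) ^ 2) '' S)
        ≤ F u / (((∫⁻ x, ENNReal.ofReal |u x| ^ p ∂μ) ^ (1 / p)).toReal) ^ 2 :=
          csInf_le (hbdd p) ⟨u, hu, rfl⟩
      _ < _ := hp
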